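/- Let C be a triangulated category and let T be a full subcategory of C. Let W be the class of morphisms f : X → Y such that in some (equivalently any) triangle Z → X → Y → ΣZ both connecting morphisms factor through objects of T^⊥. If f is a retract of a morphism w in W (in the arrow category), then f belongs to W. -/

import Mathlib

open CategoryTheory CategoryTheory.Limits CategoryTheory.Pretriangulated

variable {C : Type*} [Category C] [Preadditive C] [HasZeroObject C]
  [HasShift C ℤ] [∀ n : ℤ, Functor.Additive (CategoryTheory.shiftFunctor C n)]
  [Pretriangulated C]

/-- `f` factors through an object of the set `S`. -/
def FactorsThruSet (S : Set C) {X Y : C} (f : X ⟶ Y) : Prop :=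
  ∃ U ∈ S, ∃ (a : X ⟶ U) (b : U ⟶ Y), f = a ≫ b

/-- The right perpendicular subcategory `T^⊥` of a full subcategory `T`. -/
def rperp (T : Set C) : Set C := {Z | ∀ T' ∈ T, ∀ (f : T' ⟶ Z), f = 0}

/-- The class `W` of morphisms whose connecting morphisms in any triangle factor
through `T^⊥`. -/
def Wclass (T : Set C) {X Y : C} (f : X ⟶ Y) : Prop :=
  ∀ (Z : C) (r : Z ⟶ X) (s : Y ⟶ Z⟦(1:ℤ)⟧),
    (Triangle.mk r f s ∈ distTriang C) →
      FactorsThruSet (rperp T) r ∧ FactorsThruSet (rperp T) s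

/-- `f` is a retract of `g` in the arrow category of `C`. -/
def IsArrowRetract {X Y Z W : C} (f : X ⟶ Y) (g : Z ⟶ W) : Prop :=
  ∃ (i : X ⟶ Z) (r : Z ⟶ X) (j : Y ⟶ W) (s : W ⟶ Y),
    i ≫ r = 𝟙 X ∧ j ≫ s = 𝟙 Y ∧ i ≫ g = f ≫ j ∧ g ≫ s = r ≫ f

/-- The class `W` is stable under retracts in the arrow category. -/
theorem Wclass_stableUnderRetracts (T : Set C) {X Y X' Y' : C}
    (f : X ⟶ Y) (w : X' ⟶ Y') (hretract : IsArrowRetract f w) (hw : Wclass T w) :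
    Wclass T f := by
  obtain ⟨i, ρ, j, σ, hiρ, hjσ, hsq1, hsq2⟩ := hretract
  intro Z r s hT
  obtain ⟨Z', r', s', hT'⟩ := distinguished_cocone_triangle₁ w
  obtain ⟨hr', hs'⟩ := hw Z' r' s' hT'
  constructor
  · -- complete (i, j) : T_f → T_w to a : Z ⟶ Z'
    obtain ⟨a, ha₁, _⟩ := complete_distinguished_triangle_morphism₁
      (Triangle.mk r f s) (Triangle.mk r' w s') hT hT' i j hsq1.symm
    obtain ⟨U, hU, p, q, hpq⟩ := hr'
    change Z ⟶ Z' at a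
    refine ⟨U, hU, a ≫ p, q ≫ ρ, ?_⟩
    change r ≫ i = a ≫ r' at ha₁
    have : r = r ≫ i ≫ ρ := by rw [hiρ, Category.comp_id]
    rw [this, ← Category.assoc, ha₁, hpq]
    simp
  · -- complete (ρ, σ) : T_w → T_f to b : Z' ⟶ Z
    obtain ⟨b, _, hb₂⟩ := complete_distinguished_triangle_morphism₁
      (Triangle.mk r' w s') (Triangle.mk r f s) hT' hT ρ σ hsq2
    obtain ⟨V, hV, p, q, hpq⟩ := hs'
    refine ⟨V, hV, j ≫ p, q ≫ b⟦(1:ℤ)⟧', ?_⟩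
    change Z' ⟶ Z at b
    change s' ≫ b⟦(1:ℤ)⟧' = σ ≫ s at hb₂
    have : s = j ≫ σ ≫ s := by rw [← Category.assoc, hjσ, Category.id_comp]
    rw [this, ← hb₂, hpq]
    simp
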